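/- (Distance gap between the small and the over-parametrized network; precise form of Theorem 2.) Let w_* ∈ ℝ^d be nonzero, let K ≥ 1, let t ∈ ℕ and θ ≥ 0 with 2tθ ≤ 1, and let c₁ ∈ (0,1) and c₂ > 0. Let v ∈ ℝ^d (the single-neuron student network at time t) and W ∈ ℝ^{d×K} with columns w^{(1)}, …, w^{(K)} (the over-parametrized student network at time t) satisfy: (i) |⟨v, w_*⟩| = c₁‖w_*‖²; (ii) Σ_{k=1}^K ⟨w^{(k)}, w_*⟩² ≥ (1 − 2tθ) K ⟨v, w_*⟩²; (iii) ‖W‖_F² ≤ K(c₁² + c₂²)‖w_*‖². Then dist²(v, w_*) − dist²(W, w_*) ≥ ‖w_*‖² ( 2c₁(√((1 − 2tθ)K) − 1) − K(c₁² + c₂²) + c₁² ). -/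

import Mathlib

set_option maxHeartbeats 1000000


open Matrix

/-- `dist²(W, w_*) := min_{‖q‖₂ ≤ 1} ‖W − w_* qᵀ‖_F²` (squared distance to the set of
global optima), written as an infimum. -/
noncomputable def distSq {d K : ℕ} (W : Matrix (Fin d) (Fin K) ℝ) (ws : Fin d → ℝ) : ℝ :=
  sInf {r : ℝ | ∃ q : Fin K → ℝ, (∑ k, q k ^ 2) ≤ 1 ∧
    r = ∑ i, ∑ k, (W i k - ws i * q k) ^ 2}

/-- Distance gap between the small and the over-parametrized network (precise form of
Theorem 2): if `|⟨v, w_*⟩| = c₁‖w_*‖²`, `Σ_k ⟨w^{(k)}, w_*⟩² ≥ (1 − 2tθ)K⟨v, w_*⟩²`, and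
`‖W‖_F² ≤ K(c₁² + c₂²)‖w_*‖²`, then
`dist²(v, w_*) − dist²(W, w_*)
  ≥ ‖w_*‖²(2c₁(√((1 − 2tθ)K) − 1) − K(c₁² + c₂²) + c₁²)`,
where `dist²(v, w_*) = ‖v‖² + ‖w_*‖² − 2|⟨v, w_*⟩|`. -/
theorem distance_gap (d K : ℕ) (ws : Fin d → ℝ) (hws : ws ≠ 0) (hK : 1 ≤ K)
    (t : ℕ) (θ : ℝ) (hθ : 0 ≤ θ) (htθ : 2 * (t : ℝ) * θ ≤ 1)
    (c₁ c₂ : ℝ) (hc₁0 : 0 < c₁) (hc₁1 : c₁ < 1) (hc₂ : 0 < c₂)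
    (v : Fin d → ℝ) (W : Matrix (Fin d) (Fin K) ℝ)
    (h1 : |v ⬝ᵥ ws| = c₁ * (∑ i, ws i ^ 2))
    (h2 : (1 - 2 * (t : ℝ) * θ) * K * (v ⬝ᵥ ws) ^ 2 ≤ ∑ k, (∑ i, W i k * ws i) ^ 2)
    (h3 : ∑ i, ∑ k, W i k ^ 2 ≤ K * (c₁ ^ 2 + c₂ ^ 2) * (∑ i, ws i ^ 2)) :
    (∑ i, ws i ^ 2) * (2 * c₁ * (Real.sqrt ((1 - 2 * (t : ℝ) * θ) * K) - 1)
        - K * (c₁ ^ 2 + c₂ ^ 2) + c₁ ^ 2)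
      ≤ ((∑ i, v i ^ 2) + (∑ i, ws i ^ 2) - 2 * |v ⬝ᵥ ws|) - distSq W ws := by
  set A := ∑ i, ws i ^ 2 with hA
  have hA0 : 0 < A := by
    obtain ⟨i, hi⟩ := Function.ne_iff.mp hws
    exact Finset.sum_pos' (fun j _ => sq_nonneg _) ⟨i, Finset.mem_univ i, by simpa [sq_abs] using pow_pos (abs_pos.mpr hi) 2⟩
  set S := ∑ k, (∑ i, W i k * ws i) ^ 2 with hS
  have hS0 : 0 ≤ S := Finset.sum_nonneg fun _ _ => sq_nonneg _
  have hbdd : BddBelow {r : ℝ | ∃ q : Fin K → ℝ, (∑ k, q k ^ 2) ≤ 1 ∧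
      r = ∑ i, ∑ k, (W i k - ws i * q k) ^ 2} := by
    refine ⟨0, fun r hr => ?_⟩
    obtain ⟨q, _, rfl⟩ := hr
    exact Finset.sum_nonneg fun i _ => Finset.sum_nonneg fun k _ => sq_nonneg _
  have key : ∀ q : Fin K → ℝ, (∑ i, ∑ k, (W i k - ws i * q k) ^ 2)
      = (∑ i, ∑ k, W i k ^ 2) - 2 * (∑ k, q k * (∑ i, W i k * ws i))
        + A * ∑ k, q k ^ 2 := by
    intro q
    rw [Finset.sum_comm]
    have e1 : ∀ k : Fin K, ∑ i, (W i k - ws i * q k) ^ 2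
        = (∑ i, W i k ^ 2) - 2 * (q k * (∑ i, W i k * ws i)) + q k ^ 2 * A := by
      intro k
      rw [hA, Finset.mul_sum, Finset.mul_sum, Finset.mul_sum, ← Finset.sum_sub_distrib,
        ← Finset.sum_add_distrib]
      exact Finset.sum_congr rfl fun i _ => by ring
    simp_rw [e1]
    rw [Finset.sum_add_distrib, Finset.sum_sub_distrib, ← Finset.mul_sum, ← Finset.sum_mul,
      Finset.sum_comm]
    ring
  have hub : distSq W ws ≤ (∑ i, ∑ k, W i k ^ 2) + A - 2 * Real.sqrt S := by
    rcases eq_or_lt_of_le hS0 with h0 | hpos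
    · have hs : Real.sqrt S = 0 := by rw [← h0, Real.sqrt_zero]
      rw [hs]
      have hmem : (∑ i, ∑ k, (W i k - ws i * (0 : Fin K → ℝ) k) ^ 2) ∈
          {r : ℝ | ∃ q : Fin K → ℝ, (∑ k, q k ^ 2) ≤ 1 ∧
            r = ∑ i, ∑ k, (W i k - ws i * q k) ^ 2} := ⟨0, by simp, rfl⟩
      have := csInf_le hbdd hmem
      rw [key 0] at this
      simp at this
      calc distSq W ws ≤ _ := this
        _ ≤ _ := by nlinarith [hA0]
    · set q : Fin K → ℝ := fun k => (∑ i, W i k * ws i) / Real.sqrt S with hq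
      have hsq : Real.sqrt S ^ 2 = S := Real.sq_sqrt hS0
      have hsp : 0 < Real.sqrt S := Real.sqrt_pos.mpr hpos
      have hq2 : (∑ k, q k ^ 2) = 1 := by
        simp_rw [hq, div_pow, hsq, ← Finset.sum_div]
        exact div_self (ne_of_gt hpos)
      have hqa : (∑ k, q k * (∑ i, W i k * ws i)) = Real.sqrt S := by
        simp_rw [hq, div_mul_eq_mul_div, ← sq, ← Finset.sum_div, ← hS]
        rw [← hsq]
        field_simp
        rw [Real.sqrt_sq hsp.le]
      have hmem : ((∑ i, ∑ k, W i k ^ 2) + A - 2 * Real.sqrt S) ∈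
          {r : ℝ | ∃ q : Fin K → ℝ, (∑ k, q k ^ 2) ≤ 1 ∧
            r = ∑ i, ∑ k, (W i k - ws i * q k) ^ 2} := by
        refine ⟨q, le_of_eq hq2, ?_⟩
        rw [key q, hq2, hqa]; ring
      exact csInf_le hbdd hmem
  -- lower bound on ‖v‖²
  have hcs : (v ⬝ᵥ ws) ^ 2 ≤ (∑ i, v i ^ 2) * A := by
    simpa [dotProduct] using Finset.sum_mul_sq_le_sq_mul_sq Finset.univ v ws
  have hvlb : c₁ ^ 2 * A ≤ ∑ i, v i ^ 2 := by
    have h1' : (v ⬝ᵥ ws) ^ 2 = c₁ ^ 2 * A ^ 2 := by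
      rw [← sq_abs, h1]; ring
    nlinarith [hA0, hcs]
  -- lower bound on √S
  have hE : 0 ≤ (1 - 2 * (t : ℝ) * θ) * K := mul_nonneg (by linarith) (Nat.cast_nonneg K)
  have hSlb : Real.sqrt ((1 - 2 * (t : ℝ) * θ) * K) * (c₁ * A) ≤ Real.sqrt S := by
    have h2' : (1 - 2 * (t : ℝ) * θ) * K * (v ⬝ᵥ ws) ^ 2 ≤ S := h2
    have : Real.sqrt ((1 - 2 * (t : ℝ) * θ) * K * (v ⬝ᵥ ws) ^ 2) ≤ Real.sqrt S :=
      Real.sqrt_le_sqrt h2'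
    rw [Real.sqrt_mul hE, Real.sqrt_sq_eq_abs, h1] at this
    exact this
  rw [h1]
  nlinarith [hub, hvlb, hSlb, hA0, h3, Real.sqrt_nonneg ((1 - 2 * (t : ℝ) * θ) * K)]
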